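/- Let n, m be positive integers, Q ∈ ℝ^{n×m}, and let r ∈ ℝ^n, c ∈ ℝ^m have strictly positive entries with ‖r‖₁ = ‖c‖₁, ‖r‖_∞ ≤ 1, ‖c‖_∞ ≤ 1. Let μ ≥ 1 be a real number such that μ·r and μ·c have all integer entries. Suppose η > 0, α ∈ ℝ^n, β ∈ ℝ^m, and the matrix X with X_{ij} = exp(η(α_i + β_j − Q_{ij})) satisfies X_{ij} ≤ 1 for all i,j, X·1 = r, and ‖Xᵀ·1 − c‖₁ ≤ 1/(2μ). Then, writing D = Σ_{i∈[n]} r_i α_i + Σ_{j∈[m]} c_j β_j, the duality gap satisfies OPT − D ≤ 2η⁻¹‖r‖₁ log(mμ). -/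

import Mathlib

open Finset in
set_option maxHeartbeats 1000000 in
lemma exists_matrix_of_hall {n m : ℕ} (k : Fin n → ℕ) (l : Fin m → ℕ)
    (S : Fin n → Fin m → Prop) [∀ i j, Decidable (S i j)]
    (hsum : ∑ i, k i = ∑ j, l j)
    (hall : ∀ A : Finset (Fin n),
      ∑ i ∈ A, k i ≤ ∑ j ∈ univ.filter (fun j => ∃ i ∈ A, S i j), l j) :
    ∃ Y : Matrix (Fin n) (Fin m) ℕ,
      (∀ i, ∑ j, Y i j = k i) ∧ (∀ j, ∑ i, Y i j = l j) ∧
      (∀ i j, 0 < Y i j → S i j) := by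
  classical
  set t : (Σ i : Fin n, Fin (k i)) → Finset (Σ j : Fin m, Fin (l j)) :=
    fun p => univ.filter (fun q => S p.1 q.1) with ht
  have hcardκ : ∀ j : Fin m,
      (univ.filter (fun q : Σ j : Fin m, Fin (l j) => q.1 = j)).card = l j := by
    intro j
    have h : (univ.filter (fun q : Σ j : Fin m, Fin (l j) => q.1 = j))
        = ({j} : Finset (Fin m)).sigma (fun _ => univ) := by
      ext q
      rw [Finset.mem_sigma, Finset.mem_filter, Finset.mem_singleton]
      simp
    rw [h, Finset.card_sigma]
    simp
  have hcardι : ∀ i : Fin n,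
      (univ.filter (fun p : Σ i : Fin n, Fin (k i) => p.1 = i)).card = k i := by
    intro i
    have h : (univ.filter (fun p : Σ i : Fin n, Fin (k i) => p.1 = i))
        = ({i} : Finset (Fin n)).sigma (fun _ => univ) := by
      ext p
      rw [Finset.mem_sigma, Finset.mem_filter, Finset.mem_singleton]
      simp
    rw [h, Finset.card_sigma]
    simp
  have hHall : ∀ s : Finset (Σ i : Fin n, Fin (k i)), s.card ≤ (s.biUnion t).card := by
    intro s
    set A := s.image Sigma.fst with hA
    have h1 : s.card ≤ ∑ i ∈ A, k i := by
      have hsub : s ⊆ A.sigma (fun i => (univ : Finset (Fin (k i)))) := by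
        intro p hp
        rw [Finset.mem_sigma]
        exact ⟨Finset.mem_image_of_mem _ hp, Finset.mem_univ _⟩
      calc s.card ≤ (A.sigma (fun i => (univ : Finset (Fin (k i))))).card :=
            Finset.card_le_card hsub
        _ = ∑ i ∈ A, k i := by rw [Finset.card_sigma]; simp
    have h2 : s.biUnion t = (univ.filter (fun j => ∃ i ∈ A, S i j)).sigma
        (fun j => (univ : Finset (Fin (l j)))) := by
      ext q
      constructor
      · intro hq
        obtain ⟨p, hp, hpt⟩ := Finset.mem_biUnion.mp hq
        have hS := (Finset.mem_filter.mp hpt).2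
        exact Finset.mem_sigma.mpr ⟨Finset.mem_filter.mpr ⟨Finset.mem_univ _,
          ⟨p.1, Finset.mem_image_of_mem _ hp, hS⟩⟩, Finset.mem_univ _⟩
      · intro hq
        obtain ⟨i, hiA, hS⟩ := (Finset.mem_filter.mp (Finset.mem_sigma.mp hq).1).2
        obtain ⟨p, hp, hpi⟩ := Finset.mem_image.mp hiA
        exact Finset.mem_biUnion.mpr ⟨p, hp, Finset.mem_filter.mpr ⟨Finset.mem_univ _,
          by rw [hpi]; exact hS⟩⟩
    rw [h2, Finset.card_sigma]
    calc s.card ≤ ∑ i ∈ A, k i := h1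
      _ ≤ ∑ j ∈ univ.filter (fun j => ∃ i ∈ A, S i j), l j := hall A
      _ = _ := by simp
  obtain ⟨f, hfinj, hft⟩ := (Finset.all_card_le_biUnion_card_iff_exists_injective t).mp hHall
  refine ⟨fun i j => (univ.filter (fun p : Σ i : Fin n, Fin (k i) =>
      p.1 = i ∧ (f p).1 = j)).card, ?_, ?_, ?_⟩
  · intro i
    have h := Finset.card_eq_sum_card_fiberwise
      (s := univ.filter (fun p : Σ i : Fin n, Fin (k i) => p.1 = i)) (t := univ)
      (f := fun p => (f p).1) (fun p _ => Finset.mem_univ _)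
    rw [hcardι i] at h
    rw [h]
    apply Finset.sum_congr rfl
    intro j _
    rw [Finset.filter_filter]
  · intro j
    have hle : ∀ j : Fin m,
        (univ.filter (fun p : Σ i : Fin n, Fin (k i) => (f p).1 = j)).card ≤ l j := by
      intro j
      rw [← hcardκ j]
      apply Finset.card_le_card_of_injOn f
      · intro p hp
        simp only [Finset.mem_coe, Finset.mem_filter, Finset.mem_univ, true_and] at hp ⊢
        exact hp
      · exact fun a _ b _ h => hfinj h
    have htot : ∑ j : Fin m,
        (univ.filter (fun p : Σ i : Fin n, Fin (k i) => (f p).1 = j)).card = ∑ j, l j := by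
      have h := Finset.card_eq_sum_card_fiberwise
        (s := (univ : Finset (Σ i : Fin n, Fin (k i)))) (t := univ)
        (f := fun p => (f p).1) (fun p _ => Finset.mem_univ _)
      rw [← h, ← hsum, Finset.card_univ, Fintype.card_sigma]
      simp
    have hfib : (univ.filter (fun p : Σ i : Fin n, Fin (k i) => (f p).1 = j)).card = l j := by
      by_contra hne
      have hlt : (univ.filter (fun p : Σ i : Fin n, Fin (k i) => (f p).1 = j)).card < l j :=
        lt_of_le_of_ne (hle j) hne
      have hltsum := Finset.sum_lt_sum (fun j _ => hle j) ⟨j, Finset.mem_univ _, hlt⟩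
      rw [htot] at hltsum
      exact lt_irrefl _ hltsum
    have h := Finset.card_eq_sum_card_fiberwise
      (s := univ.filter (fun p : Σ i : Fin n, Fin (k i) => (f p).1 = j)) (t := univ)
      (f := fun p => p.1) (fun p _ => Finset.mem_univ _)
    rw [hfib] at h
    rw [h]
    apply Finset.sum_congr rfl
    intro i _
    rw [Finset.filter_filter]
    have hcongr : (univ.filter (fun p : Σ i : Fin n, Fin (k i) => (f p).1 = j ∧ p.1 = i))
        = (univ.filter (fun p : Σ i : Fin n, Fin (k i) => p.1 = i ∧ (f p).1 = j)) :=
      Finset.filter_congr (fun x _ => and_comm)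
    rw [hcongr]
  · intro i j hpos
    have hne : (univ.filter (fun p : Σ i : Fin n, Fin (k i) =>
        p.1 = i ∧ (f p).1 = j)).Nonempty := Finset.card_pos.mp hpos
    obtain ⟨p, hp⟩ := hne
    simp only [Finset.mem_filter] at hp
    have h := hft p
    simp only [ht, Finset.mem_filter, Finset.mem_univ, true_and] at h
    rw [← hp.2.1, ← hp.2.2]
    exact h


lemma hall_numeric (m μ s a : ℝ) (hm : 1 ≤ m) (h52 : 5/2 ≤ m*μ)
    (hμs : 1 ≤ μ*s) (hsa : s ≤ a) (ham : a ≤ m) (hμ0 : 0 < μ) (hs0 : 0 < s)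
    (hkey : m^2*μ^2*(2*(μ*s)-1) ≤ 2*μ^2*a*(m-a+s)) : False := by
  have h1 : 0 ≤ μ*s - 1 := by linarith
  have h2 : 0 ≤ m - s := by linarith
  have h3 : 0 ≤ m*μ - 5/2 := by linarith
  nlinarith [mul_nonneg h1 h2, mul_nonneg (mul_nonneg h1 h2) h3,
    mul_nonneg h1 h3, mul_nonneg h2 h3, mul_nonneg (mul_nonneg h1 h2) (le_of_lt hμ0),
    sq_nonneg (m + s - 2*a), mul_nonneg (mul_nonneg h3 h3) (le_of_lt hs0),
    mul_nonneg (mul_nonneg h1 h3) h3, mul_pos hμ0 hs0, sq_nonneg (μ*s - 1),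
    mul_nonneg (sq_nonneg (m + s - 2*a)) (le_of_lt hμ0)]

open Finset in
set_option maxHeartbeats 3000000 in
lemma hall_condition {n m : ℕ} (hm : 0 < m) {μ : ℝ} (hμ : 1 ≤ μ)
    (r : Fin n → ℝ) (c : Fin m → ℝ) (X : Matrix (Fin n) (Fin m) ℝ)
    (k : Fin n → ℕ) (l : Fin m → ℕ)
    (hk : ∀ i, (k i : ℝ) = μ * r i) (hl : ∀ j, (l j : ℝ) = μ * c j)
    (hk1 : ∀ i, 1 ≤ k i) (hl1 : ∀ j, 1 ≤ l j)
    (hr1 : ∀ i, r i ≤ 1) (hc1 : ∀ j, c j ≤ 1)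
    (hrc : ∑ i, r i = ∑ j, c j)
    (hXpos : ∀ i j, 0 < X i j)
    (hXrow : ∀ i, ∑ j, X i j = r i)
    (hXcol : ∑ j, |(∑ i, X i j) - c j| ≤ 1 / (2 * μ)) :
    ∀ A : Finset (Fin n), ∑ i ∈ A, k i ≤
      ∑ j ∈ univ.filter (fun j => ∃ i ∈ A, (((m:ℝ) * μ)^2)⁻¹ ≤ X i j), l j := by
  classical
  have hμ0 : (0:ℝ) < μ := lt_of_lt_of_le one_pos hμ
  have hm0 : (0:ℝ) < m := by exact_mod_cast hm
  have hmμ0 : (0:ℝ) < (m:ℝ) * μ := mul_pos hm0 hμ0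
  set θ : ℝ := (((m:ℝ) * μ)^2)⁻¹ with hθ
  have hθ0 : 0 < θ := by positivity
  have hrlb : ∀ i, 1 / μ ≤ r i := by
    intro i
    have h1 : (1:ℝ) ≤ μ * r i := by rw [← hk i]; exact_mod_cast hk1 i
    rw [div_le_iff₀ hμ0]
    linarith [h1]
  have hclb : ∀ j, 1 / μ ≤ c j := by
    intro j
    have h1 : (1:ℝ) ≤ μ * c j := by rw [← hl j]; exact_mod_cast hl1 j
    rw [div_le_iff₀ hμ0]
    linarith [h1]
  have hrpos : ∀ i, 0 < r i := fun i => lt_of_lt_of_le (by positivity) (hrlb i)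
  have hcpos : ∀ j, 0 < c j := fun j => lt_of_lt_of_le (by positivity) (hclb j)
  set R : ℝ := ∑ j, c j with hR
  have hRm : R ≤ m := by
    calc R ≤ ∑ j : Fin m, (1:ℝ) := Finset.sum_le_sum (fun j _ => hc1 j)
      _ = m := by simp
  have hcol1 : ∀ j, |(∑ i, X i j) - c j| ≤ 1 / (2 * μ) := by
    intro j
    refine le_trans ?_ hXcol
    exact Finset.single_le_sum (f := fun j => |(∑ i, X i j) - c j|)
      (fun j _ => abs_nonneg _) (Finset.mem_univ j)
  have hklsum : ∑ i, k i = ∑ j, l j := by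
    have e1 : ((∑ i, k i : ℕ) : ℝ) = μ * ∑ i, r i := by
      push_cast
      rw [Finset.mul_sum]
      exact Finset.sum_congr rfl (fun i _ => hk i)
    have e2 : ((∑ j, l j : ℕ) : ℝ) = μ * ∑ j, c j := by
      push_cast
      rw [Finset.mul_sum]
      exact Finset.sum_congr rfl (fun j _ => hl j)
    have e3 : ((∑ i, k i : ℕ) : ℝ) = ((∑ j, l j : ℕ) : ℝ) := by
      rw [e1, e2, hrc]
    exact_mod_cast e3
  intro A
  set NA := univ.filter (fun j => ∃ i ∈ A, θ ≤ X i j) with hNA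
  by_cases hbig : 5/2 ≤ (m:ℝ) * μ
  · by_contra hcon
    push_neg at hcon
    have hconN : ∑ j ∈ NA, l j + 1 ≤ ∑ i ∈ A, k i := hcon
    have hconR : (∑ j ∈ NA, (l j:ℝ)) + 1 ≤ ∑ i ∈ A, (k i:ℝ) := by exact_mod_cast hconN
    set a := ∑ i ∈ A, r i with ha
    set B := NAᶜ with hB
    set b := ∑ j ∈ B, c j with hb
    have hsplit : ∑ j ∈ NA, c j = R - b := by
      have := Finset.sum_add_sum_compl NA c
      rw [← hb] at this
      linarith [this]
    have hmain : μ * (R - b) + 1 ≤ μ * a := by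
      have e1 : ∑ i ∈ A, (k i:ℝ) = μ * a := by
        rw [ha, Finset.mul_sum]
        exact Finset.sum_congr rfl (fun i _ => hk i)
      have e2 : ∑ j ∈ NA, (l j:ℝ) = μ * (R - b) := by
        rw [← hsplit, Finset.mul_sum]
        exact Finset.sum_congr rfl (fun j _ => hl j)
      rw [← e1, ← e2]
      exact hconR
    set s := a + b - R with hs
    have hμs : 1 ≤ μ * s := by
      have : μ * s = μ * a - (μ * (R - b)) := by rw [hs]; ring
      linarith [hmain, this]
    have hs0 : 0 < s := by nlinarith
    have haR : a ≤ R := by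
      have h1 : a ≤ ∑ i, r i := Finset.sum_le_sum_of_subset_of_nonneg
        (Finset.subset_univ _) (fun i _ _ => le_of_lt (hrpos i))
      rw [hrc] at h1
      exact h1
    have hbR : b ≤ R := by
      rw [hb, hR]
      exact Finset.sum_le_sum_of_subset_of_nonneg (Finset.subset_univ _)
        (fun j _ _ => le_of_lt (hcpos j))
    have hsa : s ≤ a := by rw [hs]; linarith
    set T := ∑ i ∈ A, ∑ j ∈ B, X i j with hT
    -- T lower bound
    have hcompl_r : ∑ i ∈ Aᶜ, r i = R - a := by
      have h := Finset.sum_add_sum_compl A r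
      rw [← ha, hrc] at h
      linarith [h]
    have hT1 : b ≤ T + (R - a) + 1 / (2 * μ) := by
      have step1 : b ≤ (∑ j ∈ B, (∑ i, X i j)) + 1 / (2*μ) := by
        have e1 : ∀ j ∈ B, c j ≤ (∑ i, X i j) + |(∑ i, X i j) - c j| := by
          intro j _
          have := abs_nonneg ((∑ i, X i j) - c j)
          have := neg_abs_le ((∑ i, X i j) - c j)
          linarith
        calc b ≤ ∑ j ∈ B, ((∑ i, X i j) + |(∑ i, X i j) - c j|) :=
              Finset.sum_le_sum e1
          _ = (∑ j ∈ B, (∑ i, X i j)) + ∑ j ∈ B, |(∑ i, X i j) - c j| := by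
              rw [Finset.sum_add_distrib]
          _ ≤ (∑ j ∈ B, (∑ i, X i j)) + 1/(2*μ) := by
              have : ∑ j ∈ B, |(∑ i, X i j) - c j| ≤ ∑ j, |(∑ i, X i j) - c j| :=
                Finset.sum_le_sum_of_subset_of_nonneg (Finset.subset_univ _)
                  (fun j _ _ => abs_nonneg _)
              linarith [hXcol, this]
      have step2 : (∑ j ∈ B, (∑ i, X i j)) ≤ T + (R - a) := by
        have bnd : ∑ i ∈ Aᶜ, (∑ j ∈ B, X i j) ≤ R - a := by
          rw [← hcompl_r]
          apply Finset.sum_le_sum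
          intro i _
          rw [← hXrow i]
          exact Finset.sum_le_sum_of_subset_of_nonneg (Finset.subset_univ _)
            (fun j _ _ => le_of_lt (hXpos i j))
        calc ∑ j ∈ B, (∑ i, X i j) = ∑ i, (∑ j ∈ B, X i j) := Finset.sum_comm
          _ = (∑ i ∈ A, ∑ j ∈ B, X i j) + (∑ i ∈ Aᶜ, ∑ j ∈ B, X i j) :=
            (Finset.sum_add_sum_compl A _).symm
          _ ≤ T + (R - a) := by rw [hT]; exact add_le_add_right bnd _
      linarith [step1, step2]
    -- T upper bound
    have hT2 : T ≤ (A.card : ℝ) * (B.card : ℝ) * θ := by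
      have per : ∀ i ∈ A, ∑ j ∈ B, X i j ≤ (B.card : ℝ) * θ := by
        intro i hi
        have e : ∀ j ∈ B, X i j ≤ θ := by
          intro j hj
          rw [hB, Finset.mem_compl, hNA, Finset.mem_filter] at hj
          push_neg at hj
          exact le_of_lt (hj (Finset.mem_univ j) i hi)
        calc ∑ j ∈ B, X i j ≤ ∑ j ∈ B, θ := Finset.sum_le_sum e
          _ = (B.card : ℝ) * θ := by rw [Finset.sum_const, nsmul_eq_mul]
      calc T ≤ ∑ i ∈ A, (B.card : ℝ) * θ := Finset.sum_le_sum per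
        _ = (A.card : ℝ) * ((B.card : ℝ) * θ) := by rw [Finset.sum_const, nsmul_eq_mul]
        _ = (A.card : ℝ) * (B.card : ℝ) * θ := by ring
    have hAcard : (A.card : ℝ) ≤ μ * a := by
      have : (A.card : ℝ) = ∑ i ∈ A, (1:ℝ) := by simp
      rw [this, ha, Finset.mul_sum]
      apply Finset.sum_le_sum
      intro i _
      rw [← hk i]
      exact_mod_cast hk1 i
    have hBcard : (B.card : ℝ) ≤ (m:ℝ) - (R - b) := by
      have h1 : R - b ≤ (NA.card : ℝ) := by
        rw [← hsplit]
        calc ∑ j ∈ NA, c j ≤ ∑ j ∈ NA, (1:ℝ) := Finset.sum_le_sum (fun j _ => hc1 j)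
          _ = (NA.card : ℝ) := by simp
      have h2 : (NA.card : ℝ) + (B.card : ℝ) = m := by
        have h3 : NA.card + NAᶜ.card = m := by
          rw [Finset.card_add_card_compl, Fintype.card_fin]
        rw [hB]
        exact_mod_cast h3
      linarith
    -- combine
    have hchain : s - 1/(2*μ) ≤ μ * a * ((m:ℝ) - a + s) * θ := by
      have c1 : s - 1/(2*μ) ≤ T := by rw [hs]; linarith [hT1]
      have c2 : (A.card : ℝ) * (B.card : ℝ) * θ ≤ μ * a * ((m:ℝ) - a + s) * θ := by
        apply mul_le_mul_of_nonneg_right _ (le_of_lt hθ0)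
        have hBm : (m:ℝ) - (R - b) = (m:ℝ) - a + s := by rw [hs]; ring
        have hB0 : (0:ℝ) ≤ (B.card : ℝ) := Nat.cast_nonneg _
        have hA0 : (0:ℝ) ≤ (A.card : ℝ) := Nat.cast_nonneg _
        rw [← hBm]
        exact mul_le_mul hAcard hBcard hB0 (le_trans hA0 hAcard)
      exact le_trans c1 (le_trans hT2 c2)
    have hkey : (m:ℝ)^2*μ^2*(2*(μ*s)-1) ≤ 2*μ^2*a*((m:ℝ)-a+s) := by
      have hsq : θ * ((m:ℝ)*μ)^2 = 1 := inv_mul_cancel₀ (by positivity)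
      have h' : (s - 1/(2*μ)) * ((m:ℝ)*μ)^2 ≤ μ * a * ((m:ℝ)-a+s) := by
        calc (s - 1/(2*μ)) * ((m:ℝ)*μ)^2
            ≤ (μ * a * ((m:ℝ)-a+s) * θ) * ((m:ℝ)*μ)^2 :=
              mul_le_mul_of_nonneg_right hchain (by positivity)
          _ = μ * a * ((m:ℝ)-a+s) * (θ * ((m:ℝ)*μ)^2) := by ring
          _ = μ * a * ((m:ℝ)-a+s) := by rw [hsq, mul_one]
      have h'' := mul_le_mul_of_nonneg_left h' (by positivity : (0:ℝ) ≤ 2*μ)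
      have e : 2*μ*((s - 1/(2*μ)) * ((m:ℝ)*μ)^2) = (m:ℝ)^2*μ^2*(2*(μ*s)-1) := by
        field_simp
      rw [e] at h''
      linarith [h'']
    have ham : a ≤ (m:ℝ) := le_trans haR hRm
    exact hall_numeric (m:ℝ) μ s a (by exact_mod_cast hm) hbig hμs hsa ham hμ0 hs0 hkey
  · -- small m*μ cases: m = 1 or m = 2 with μ < 5/4
    push_neg at hbig
    have hm2 : m = 1 ∨ m = 2 := by
      have : (m:ℝ) ≤ (m:ℝ) * μ := le_mul_of_one_le_right (le_of_lt hm0) hμ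
      have hmlt : (m:ℝ) < 5/2 := lt_of_le_of_lt this hbig
      have : m < 3 := by exact_mod_cast hmlt.trans_le (by norm_num : (5/2:ℝ) ≤ 3)
      omega
    rcases A.eq_empty_or_nonempty with hA | hAne
    · rw [hA, Finset.sum_empty]
      exact Nat.zero_le _
    rcases hm2 with hm1 | hm2
    · -- m = 1
      subst hm1
      have hNAuniv : NA = univ := by
        apply Finset.eq_univ_of_forall
        intro j
        rw [hNA, Finset.mem_filter]
        obtain ⟨i0, hi0⟩ := hAne
        refine ⟨Finset.mem_univ _, i0, hi0, ?_⟩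
        have h0 : j = 0 := Subsingleton.elim j 0
        have hXval : X i0 j = r i0 := by
          rw [← hXrow i0, Fin.sum_univ_one, h0]
        rw [hXval]
        have hθμ : θ ≤ 1/μ := by
          rw [hθ, one_div]
          push_cast
          rw [one_mul]
          have h1 : μ ≤ μ^2 := by nlinarith
          have := inv_anti₀ hμ0 h1
          exact this
        linarith [hrlb i0]
      rw [hNAuniv]
      calc ∑ i ∈ A, k i ≤ ∑ i, k i :=
            Finset.sum_le_sum_of_subset (Finset.subset_univ _)
        _ = ∑ j, l j := hklsum
    · -- m = 2, μ < 5/4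
      subst hm2
      have hμ54 : μ < 5/4 := by
        push_cast at hbig
        linarith
      have hk2 : ∀ i, k i = 1 := by
        intro i
        have h2 : ((k i : ℕ) : ℝ) < 2 := by
          rw [hk i]
          nlinarith [hr1 i, hrpos i]
        have : k i < 2 := by exact_mod_cast h2
        have := hk1 i
        omega
      have hl2 : ∀ j, l j = 1 := by
        intro j
        have h2 : ((l j : ℕ) : ℝ) < 2 := by
          rw [hl j]
          nlinarith [hc1 j, hcpos j]
        have : l j < 2 := by exact_mod_cast h2
        have := hl1 j
        omega
      have hrval : ∀ i, r i = 1/μ := by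
        intro i
        have : (1:ℝ) = μ * r i := by rw [← hk i, hk2 i]; norm_num
        field_simp
        linarith [this]
      have hn2 : n = 2 := by
        have h1 : ∑ i, k i = n := by simp [hk2]
        have h2 : ∑ j, l j = 2 := by simp [hl2]
        omega
      subst hn2
      have hθval : θ ≤ 1/(4*μ) := by
        rw [hθ, one_div]
        push_cast
        rw [show ((2:ℝ)*μ)^2 = 4*μ^2 by ring]
        have h1 : 4*μ ≤ 4*μ^2 := by nlinarith
        exact inv_anti₀ (by positivity) h1
      -- rewrite sums as cards
      have hsumA : ∑ i ∈ A, k i = A.card := by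
        rw [Finset.sum_congr rfl (fun i _ => hk2 i)]
        simp
      have hsumNA : ∑ j ∈ NA, l j = NA.card := by
        rw [Finset.sum_congr rfl (fun j _ => hl2 j)]
        simp
      rw [hsumA, hsumNA]
      have hNAne : NA.Nonempty := by
        obtain ⟨i0, hi0⟩ := hAne
        have hsum : ∑ _j : Fin 2, (1/(4*μ)) ≤ ∑ j, X i0 j := by
          rw [hXrow i0, hrval i0, Finset.sum_const]
          simp only [Finset.card_univ, Fintype.card_fin, nsmul_eq_mul]
          push_cast
          have h24 : (2:ℝ) * (1/(4*μ)) = 1/(2*μ) := by field_simp; ring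
          rw [h24, div_le_div_iff₀ (by positivity) hμ0]
          nlinarith
        obtain ⟨j0, _, hj0⟩ := Finset.exists_le_of_sum_le Finset.univ_nonempty hsum
        refine ⟨j0, ?_⟩
        rw [hNA, Finset.mem_filter]
        exact ⟨Finset.mem_univ _, i0, hi0, le_trans hθval hj0⟩
      by_cases hA1 : A.card ≤ 1
      · have := Finset.card_pos.mpr hNAne
        omega
      · have hAcard2 : A.card = 2 := by
          have := Finset.card_le_univ A
          simp at this
          omega
        have hAuniv : A = univ := Finset.eq_univ_of_card A (by simp [hAcard2])
        have hNAuniv : NA = univ := by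
          apply Finset.eq_univ_of_forall
          intro j
          rw [hNA, Finset.mem_filter]
          have hcj : 1/(2*μ) ≤ ∑ i, X i j := by
            have habs := (abs_le.mp (hcol1 j)).1
            have : (1:ℝ) = μ * c j := by rw [← hl j, hl2 j]; norm_num
            have hcj' : c j = 1/μ := by field_simp; linarith [this]
            rw [hcj'] at habs
            have : 1/μ - 1/(2*μ) = 1/(2*μ) := by field_simp; ring
            linarith [habs, this]
          have hsum : ∑ _i : Fin 2, (1/(4*μ)) ≤ ∑ i, X i j := by
            rw [Finset.sum_const]
            simp only [Finset.card_univ, Fintype.card_fin, nsmul_eq_mul]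
            push_cast
            have h24 : (2:ℝ) * (1/(4*μ)) = 1/(2*μ) := by field_simp; ring
            rw [h24]
            exact hcj
          obtain ⟨i1, _, hi1⟩ := Finset.exists_le_of_sum_le Finset.univ_nonempty hsum
          exact ⟨Finset.mem_univ _, i1, by rw [hAuniv]; exact Finset.mem_univ _,
            le_trans hθval hi1⟩
        rw [hNAuniv]
        simp [hAcard2]

set_option maxHeartbeats 2000000 in
/-- Duality gap bound when a doubling step of `ExpSinkhorn` triggers:
`OPT − D ≤ 2 η⁻¹ ‖r‖₁ log (m μ)` where `D = Σ r i α i + Σ c j β j`. -/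
theorem stmt_4 (n m : ℕ) (hn : 0 < n) (hm : 0 < m)
    (Q : Matrix (Fin n) (Fin m) ℝ) (r : Fin n → ℝ) (c : Fin m → ℝ)
    (hrpos : ∀ i, 0 < r i) (hcpos : ∀ j, 0 < c j)
    (hl1 : ∑ i, |r i| = ∑ j, |c j|)
    (hrinf : ∀ i, |r i| ≤ 1) (hcinf : ∀ j, |c j| ≤ 1)
    (μ : ℝ) (hμ : 1 ≤ μ)
    (hrint : ∀ i, ∃ k : ℤ, μ * r i = k) (hcint : ∀ j, ∃ k : ℤ, μ * c j = k)
    (η : ℝ) (hη : 0 < η) (α : Fin n → ℝ) (β : Fin m → ℝ)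
    (X : Matrix (Fin n) (Fin m) ℝ)
    (hX : ∀ i j, X i j = Real.exp (η * (α i + β j - Q i j)))
    (hX1 : ∀ i j, X i j ≤ 1)
    (hXrow : ∀ i, ∑ j, X i j = r i)
    (hXcol : ∑ j, |(∑ i, X i j) - c j| ≤ 1 / (2 * μ)) :
    sInf {v : ℝ | ∃ Z : Matrix (Fin n) (Fin m) ℝ,
        (∀ i j, 0 ≤ Z i j) ∧ (∀ i, ∑ j, Z i j = r i) ∧
        (∀ j, ∑ i, Z i j = c j) ∧ v = ∑ i, ∑ j, Z i j * Q i j} -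
      (∑ i, r i * α i + ∑ j, c j * β j) ≤
      2 * η⁻¹ * (∑ i, |r i|) * Real.log (m * μ) := by
  classical
  have hμ0 : (0:ℝ) < μ := lt_of_lt_of_le one_pos hμ
  have hm1R : (1:ℝ) ≤ (m:ℝ) := by exact_mod_cast hm
  have hmμ0 : (0:ℝ) < (m:ℝ) * μ := by nlinarith
  have hmμ1 : (1:ℝ) ≤ (m:ℝ) * μ := by nlinarith
  have hXpos : ∀ i j, 0 < X i j := fun i j => by rw [hX i j]; exact Real.exp_pos _
  have hrabs : ∀ i, |r i| = r i := fun i => abs_of_pos (hrpos i)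
  have hcabs : ∀ j, |c j| = c j := fun j => abs_of_pos (hcpos j)
  have hr1 : ∀ i, r i ≤ 1 := fun i => (hrabs i) ▸ hrinf i
  have hc1 : ∀ j, c j ≤ 1 := fun j => (hcabs j) ▸ hcinf j
  have hrc : ∑ i, r i = ∑ j, c j := by
    have h1 : ∑ i, r i = ∑ i, |r i| :=
      Finset.sum_congr rfl (fun i _ => (hrabs i).symm)
    have h2 : ∑ j, c j = ∑ j, |c j| :=
      Finset.sum_congr rfl (fun j _ => (hcabs j).symm)
    rw [h1, h2, hl1]
  -- integer marginals
  choose zr hzr using hrint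
  choose zc hzc using hcint
  have hzrpos : ∀ i, 0 < zr i := by
    intro i
    have h : (0:ℝ) < ((zr i : ℤ) : ℝ) := by
      rw [← hzr i]; exact mul_pos hμ0 (hrpos i)
    exact_mod_cast h
  have hzcpos : ∀ j, 0 < zc j := by
    intro j
    have h : (0:ℝ) < ((zc j : ℤ) : ℝ) := by
      rw [← hzc j]; exact mul_pos hμ0 (hcpos j)
    exact_mod_cast h
  set k : Fin n → ℕ := fun i => (zr i).toNat with hkdef
  set l : Fin m → ℕ := fun j => (zc j).toNat with hldef
  have hkz : ∀ i, ((k i : ℕ) : ℤ) = zr i := fun i => Int.toNat_of_nonneg (hzrpos i).le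
  have hlz : ∀ j, ((l j : ℕ) : ℤ) = zc j := fun j => Int.toNat_of_nonneg (hzcpos j).le
  have hk : ∀ i, ((k i : ℕ) : ℝ) = μ * r i := by
    intro i
    have h : (((k i : ℕ) : ℤ) : ℝ) = ((zr i : ℤ) : ℝ) := by rw [hkz i]
    push_cast at h
    rw [h, ← hzr i]
  have hl : ∀ j, ((l j : ℕ) : ℝ) = μ * c j := by
    intro j
    have h : (((l j : ℕ) : ℤ) : ℝ) = ((zc j : ℤ) : ℝ) := by rw [hlz j]
    push_cast at h
    rw [h, ← hzc j]
  have hk1 : ∀ i, 1 ≤ k i := by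
    intro i
    have := hzrpos i
    have := hkz i
    omega
  have hl1' : ∀ j, 1 ≤ l j := by
    intro j
    have := hzcpos j
    have := hlz j
    omega
  have hklsum : ∑ i, k i = ∑ j, l j := by
    have e1 : ((∑ i, k i : ℕ) : ℝ) = μ * ∑ i, r i := by
      push_cast
      rw [Finset.mul_sum]
      exact Finset.sum_congr rfl (fun i _ => hk i)
    have e2 : ((∑ j, l j : ℕ) : ℝ) = μ * ∑ j, c j := by
      push_cast
      rw [Finset.mul_sum]
      exact Finset.sum_congr rfl (fun j _ => hl j)
    have e3 : ((∑ i, k i : ℕ) : ℝ) = ((∑ j, l j : ℕ) : ℝ) := by rw [e1, e2, hrc]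
    exact_mod_cast e3
  have hall := hall_condition hm hμ r c X k l hk hl hk1 hl1' hr1 hc1 hrc hXpos hXrow hXcol
  obtain ⟨Y, hYrow, hYcol, hYsupp⟩ := exists_matrix_of_hall k l
    (fun i j => (((m:ℝ) * μ)^2)⁻¹ ≤ X i j) hklsum hall
  -- the rounded feasible matrix
  set Z : Matrix (Fin n) (Fin m) ℝ := fun i j => (Y i j : ℝ) / μ with hZdef
  have hZ0 : ∀ i j, 0 ≤ Z i j := fun i j => div_nonneg (Nat.cast_nonneg _) hμ0.le
  have hZrow : ∀ i, ∑ j, Z i j = r i := by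
    intro i
    rw [hZdef]
    simp only
    rw [← Finset.sum_div]
    have h1 : ∑ j, ((Y i j : ℕ) : ℝ) = ((∑ j, Y i j : ℕ) : ℝ) := by push_cast; rfl
    rw [h1, hYrow i, hk i]
    field_simp
  have hZcol : ∀ j, ∑ i, Z i j = c j := by
    intro j
    rw [hZdef]
    simp only
    rw [← Finset.sum_div]
    have h1 : ∑ i, ((Y i j : ℕ) : ℝ) = ((∑ i, Y i j : ℕ) : ℝ) := by push_cast; rfl
    rw [h1, hYcol j, hl j]
    field_simp
  set v : ℝ := ∑ i, ∑ j, Z i j * Q i j with hvdef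
  set SetS : Set ℝ := {v : ℝ | ∃ Z : Matrix (Fin n) (Fin m) ℝ,
      (∀ i j, 0 ≤ Z i j) ∧ (∀ i, ∑ j, Z i j = r i) ∧
      (∀ j, ∑ i, Z i j = c j) ∧ v = ∑ i, ∑ j, Z i j * Q i j} with hSetS
  have hmem : v ∈ SetS := ⟨Z, hZ0, hZrow, hZcol, rfl⟩
  have hbdd : BddBelow SetS := by
    refine ⟨-∑ i, ∑ j, |Q i j|, ?_⟩
    rintro w ⟨W, hW0, hWrow, hWcol, hw⟩
    have hterm : ∀ i j, -|Q i j| ≤ W i j * Q i j := by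
      intro i j
      have hWle1 : W i j ≤ 1 := by
        have h1 : W i j ≤ ∑ j', W i j' :=
          Finset.single_le_sum (f := fun j' => W i j') (fun j' _ => hW0 i j')
            (Finset.mem_univ j)
        rw [hWrow i] at h1
        exact le_trans h1 (hr1 i)
      have h2 := mul_le_mul_of_nonneg_left (neg_abs_le (Q i j)) (hW0 i j)
      have h3 := mul_le_mul_of_nonneg_right hWle1 (abs_nonneg (Q i j))
      nlinarith [h2, h3]
    have hsum : ∑ i, ∑ j, (-|Q i j|) ≤ ∑ i, ∑ j, W i j * Q i j :=
      Finset.sum_le_sum (fun i _ => Finset.sum_le_sum (fun j _ => hterm i j))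
    have heq : ∑ i, ∑ j, (-|Q i j|) = -∑ i, ∑ j, |Q i j| := by
      simp [Finset.sum_neg_distrib]
    rw [hw]
    rw [heq] at hsum
    exact hsum
  have hinf : sInf SetS ≤ v := csInf_le hbdd hmem
  -- bound the value of v
  have hQeq : ∀ i j, Q i j = α i + β j + (-Real.log (X i j)) / η := by
    intro i j
    have h1 : Real.log (X i j) = η * (α i + β j - Q i j) := by
      rw [hX i j, Real.log_exp]
    field_simp
    linarith [h1]
  have hlogθ : Real.log ((((m:ℝ) * μ)^2)⁻¹) = -(2 * Real.log ((m:ℝ) * μ)) := by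
    rw [Real.log_inv, Real.log_pow]
    push_cast
    ring
  have hterm : ∀ i j, Z i j * Q i j ≤
      Z i j * (α i + β j) + Z i j * ((2 * Real.log ((m:ℝ) * μ)) / η) := by
    intro i j
    rcases eq_or_lt_of_le (hZ0 i j) with h0 | hpos
    · rw [← h0]; ring_nf; simp
    · have hYpos : 0 < Y i j := by
        by_contra hc
        push_neg at hc
        have : Y i j = 0 := Nat.le_zero.mp hc
        rw [hZdef] at hpos
        simp only at hpos
        rw [this] at hpos
        norm_num at hpos
      have hsupp := hYsupp i j hYpos
      have hlog : -Real.log (X i j) ≤ 2 * Real.log ((m:ℝ) * μ) := by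
        have h1 : Real.log ((((m:ℝ) * μ)^2)⁻¹) ≤ Real.log (X i j) :=
          Real.log_le_log (by positivity) hsupp
        rw [hlogθ] at h1
        linarith
      have hQle : Q i j ≤ (α i + β j) + (2 * Real.log ((m:ℝ) * μ)) / η := by
        rw [hQeq i j]
        have hd : (-Real.log (X i j)) / η ≤ (2 * Real.log ((m:ℝ) * μ)) / η :=
          (div_le_div_iff_of_pos_right hη).mpr hlog
        linarith
      calc Z i j * Q i j ≤ Z i j * ((α i + β j) + (2 * Real.log ((m:ℝ) * μ)) / η) :=
            mul_le_mul_of_nonneg_left hQle hpos.le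
        _ = Z i j * (α i + β j) + Z i j * ((2 * Real.log ((m:ℝ) * μ)) / η) := by ring
  have hvbound : v ≤ (∑ i, r i * α i + ∑ j, c j * β j) +
      (2 * Real.log ((m:ℝ) * μ)) / η * (∑ i, r i) := by
    have h1 : v ≤ ∑ i, ∑ j, (Z i j * (α i + β j) +
        Z i j * ((2 * Real.log ((m:ℝ) * μ)) / η)) := by
      rw [hvdef]
      exact Finset.sum_le_sum (fun i _ => Finset.sum_le_sum (fun j _ => hterm i j))
    have e1 : ∑ i, ∑ j, Z i j * (α i + β j) = ∑ i, r i * α i + ∑ j, c j * β j := by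
      have ea : ∑ i, ∑ j, Z i j * α i = ∑ i, r i * α i := by
        apply Finset.sum_congr rfl
        intro i _
        rw [← Finset.sum_mul, hZrow i]
      have eb : ∑ i, ∑ j, Z i j * β j = ∑ j, c j * β j := by
        rw [Finset.sum_comm]
        apply Finset.sum_congr rfl
        intro j _
        rw [← Finset.sum_mul, hZcol j]
      calc ∑ i, ∑ j, Z i j * (α i + β j)
          = ∑ i, (∑ j, Z i j * α i + ∑ j, Z i j * β j) := by
            apply Finset.sum_congr rfl
            intro i _
            rw [← Finset.sum_add_distrib]
            apply Finset.sum_congr rfl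
            intro j _
            ring
        _ = ∑ i, ∑ j, Z i j * α i + ∑ i, ∑ j, Z i j * β j :=
            Finset.sum_add_distrib
        _ = ∑ i, r i * α i + ∑ j, c j * β j := by rw [ea, eb]
    have e2 : ∑ i, ∑ j, Z i j * ((2 * Real.log ((m:ℝ) * μ)) / η) =
        (2 * Real.log ((m:ℝ) * μ)) / η * (∑ i, r i) := by
      calc ∑ i, ∑ j, Z i j * ((2 * Real.log ((m:ℝ) * μ)) / η)
          = ∑ i, (∑ j, Z i j) * ((2 * Real.log ((m:ℝ) * μ)) / η) := by
            apply Finset.sum_congr rfl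
            intro i _
            rw [Finset.sum_mul]
        _ = ∑ i, r i * ((2 * Real.log ((m:ℝ) * μ)) / η) := by
            apply Finset.sum_congr rfl
            intro i _
            rw [hZrow i]
        _ = (2 * Real.log ((m:ℝ) * μ)) / η * (∑ i, r i) := by
            rw [← Finset.sum_mul]
            ring
    calc v ≤ ∑ i, ∑ j, (Z i j * (α i + β j) +
        Z i j * ((2 * Real.log ((m:ℝ) * μ)) / η)) := h1
      _ = ∑ i, ∑ j, Z i j * (α i + β j) +
          ∑ i, ∑ j, Z i j * ((2 * Real.log ((m:ℝ) * μ)) / η) := by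
          rw [← Finset.sum_add_distrib]
          apply Finset.sum_congr rfl
          intro i _
          rw [← Finset.sum_add_distrib]
      _ = (∑ i, r i * α i + ∑ j, c j * β j) +
          (2 * Real.log ((m:ℝ) * μ)) / η * (∑ i, r i) := by rw [e1, e2]
  have habs_sum : ∑ i, |r i| = ∑ i, r i :=
    Finset.sum_congr rfl (fun i _ => hrabs i)
  have hfinal : (2 * Real.log ((m:ℝ) * μ)) / η * (∑ i, r i) =
      2 * η⁻¹ * (∑ i, |r i|) * Real.log ((m:ℝ) * μ) := by
    rw [habs_sum]
    field_simp
  linarith [hinf, hvbound, hfinal.le, hfinal.ge]
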